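/- Let X be a uniformly locally bounded space. The group Aut(X) of bijections g such that g and g⁻¹ are both modest and uniformly continuous on bounded sets is a topological group for the topology of uniform biconvergence on bounded sets. -/

import Mathlib

open Filter Set UniformConvergence

/-- A bornology on `X` (paper's convention): contains singletons, closed under
subsets, and under unions of two intersecting members. -/
structure IsBornology (X : Type*) (𝔅 : Set (Set X)) : Prop where
  singleton_mem : ∀ x : X, {x} ∈ 𝔅
  mem_of_subset : ∀ A ∈ 𝔅, ∀ B : Set X, B ⊆ A → B ∈ 𝔅
  union_mem : ∀ A ∈ 𝔅, ∀ B ∈ 𝔅, (A ∩ B).Nonempty → A ∪ B ∈ 𝔅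

/-- The image `E[A] = {y | ∃ x ∈ A, (x, y) ∈ E}` of a set under an entourage. -/
def entImage {X : Type*} (E : Set (X × X)) (A : Set X) : Set X :=
  {y | ∃ x ∈ A, (x, y) ∈ E}

/-- A uniformly locally bounded space: a uniform space with a bornology admitting
a bounded uniform entourage `E` (i.e. `E[B]` is bounded for every bounded `B`). -/
structure IsULB (X : Type*) [UniformSpace X] (𝔅 : Set (Set X)) : Prop where
  born : IsBornology X 𝔅
  bounded_entourage : ∃ E ∈ uniformity X, ∀ A ∈ 𝔅, entImage E A ∈ 𝔅

/-- An endomorphism of a uniformly locally bounded space: uniformly continuous on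
every bounded set, and modest (sends bounded sets to bounded sets). -/
def IsEndo {X : Type*} [UniformSpace X] (𝔅 : Set (Set X)) (f : X → X) : Prop :=
  (∀ A ∈ 𝔅, UniformContinuous fun x : A => f x) ∧ ∀ A ∈ 𝔅, f '' A ∈ 𝔅

theorem IsEndo.comp {X : Type*} [UniformSpace X] {𝔅 : Set (Set X)} {f g : X → X}
    (hf : IsEndo 𝔅 f) (hg : IsEndo 𝔅 g) : IsEndo 𝔅 (f ∘ g) := by
  refine ⟨fun A hA => ?_, fun A hA => ?_⟩
  · have h1 : UniformContinuous fun x : A =>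
        (⟨g x, Set.mem_image_of_mem g x.2⟩ : g '' A) :=
      (hg.1 A hA).subtype_mk _
    exact (hf.1 (g '' A) (hg.2 A hA)).comp h1
  · rw [Set.image_comp]
    exact hf.2 _ (hg.2 A hA)

theorem isEndo_id {X : Type*} [UniformSpace X] {𝔅 : Set (Set X)} : IsEndo 𝔅 (id : X → X) :=
  ⟨fun _ _ => uniformContinuous_subtype_val, fun A hA => by simpa using hA⟩

/-- The group of automorphisms of a uniformly locally bounded space: bijections `g`
such that `g` and `g⁻¹` are both modest and uniformly continuous on bounded sets. -/
def ulbAut (X : Type*) [UniformSpace X] (𝔅 : Set (Set X)) : Subgroup (Equiv.Perm X) where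
  carrier := {g | IsEndo 𝔅 ⇑g ∧ IsEndo 𝔅 ⇑g.symm}
  one_mem' := ⟨isEndo_id, isEndo_id⟩
  mul_mem' := fun {a b} ha hb => ⟨ha.1.comp hb.1, hb.2.comp ha.2⟩
  inv_mem' := fun {a} ha => ⟨ha.2, ha.1⟩

/-- The uniform structure of uniform biconvergence on bounded sets on `ulbAut X 𝔅`:
the one induced by `g ↦ (g, g⁻¹)` into `(X →ᵤ[𝔅] X) × (X →ᵤ[𝔅] X)`. -/
instance ulbAutUniformSpace (X : Type*) [UniformSpace X] (𝔅 : Set (Set X)) :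
    UniformSpace ↥(ulbAut X 𝔅) :=
  UniformSpace.comap
    (fun g => (UniformOnFun.ofFun 𝔅 ⇑g.1, UniformOnFun.ofFun 𝔅 ⇑g.1.symm))
    inferInstance

section Helpers

variable {X : Type*} [UniformSpace X] {𝔅 : Set (Set X)}

/-- The embedding `g ↦ (g, g⁻¹)` into `(X →ᵤ[𝔅] X) × (X →ᵤ[𝔅] X)`. -/
private def ulbEmbed (X : Type*) [UniformSpace X] (𝔅 : Set (Set X)) :
    ↥(ulbAut X 𝔅) → (X →ᵤ[𝔅] X) × (X →ᵤ[𝔅] X) :=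
  fun g => (UniformOnFun.ofFun 𝔅 ⇑g.1, UniformOnFun.ofFun 𝔅 ⇑g.1.symm)

private lemma ulbEmbed_inducing : Topology.IsInducing (ulbEmbed X 𝔅) :=
  ⟨UniformSpace.toTopologicalSpace_comap⟩

private lemma ev_close (g₀ : ↥(ulbAut X 𝔅)) {B : Set X} (hB : B ∈ 𝔅) {W : Set (X × X)}
    (hW : W ∈ uniformity X) :
    ∀ᶠ g : ↥(ulbAut X 𝔅) in nhds g₀, ∀ x ∈ B, (g₀.1 x, g.1 x) ∈ W := by
  have h1 : Filter.Tendsto (fun g : ↥(ulbAut X 𝔅) => UniformOnFun.ofFun 𝔅 ⇑g.1) (nhds g₀)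
      (nhds (UniformOnFun.ofFun 𝔅 ⇑g₀.1)) :=
    (continuous_fst.comp (ulbEmbed_inducing (X := X) (𝔅 := 𝔅)).continuous).tendsto g₀
  rw [UniformOnFun.tendsto_iff_tendstoUniformlyOn] at h1
  exact h1 B hB W hW

/-- Joint continuity of composition for the biconvergence topology. -/
private lemma ulb_comp_cont (h : IsULB X 𝔅) :
    Continuous fun p : ↥(ulbAut X 𝔅) × ↥(ulbAut X 𝔅) =>
      UniformOnFun.ofFun 𝔅 (⇑p.1.1 ∘ ⇑p.2.1) := by
  rw [continuous_iff_continuousAt]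
  rintro ⟨g₀, h₀⟩
  rw [ContinuousAt, UniformOnFun.tendsto_iff_tendstoUniformlyOn]
  intro A hA V hV
  obtain ⟨V', hV', hV'V⟩ := comp_mem_uniformity_sets hV
  obtain ⟨E, hE, hEb⟩ := h.bounded_entourage
  have hh₀A : (⇑h₀.1 '' A) ∈ 𝔅 := h₀.2.1.2 A hA
  set B := entImage E (⇑h₀.1 '' A) with hBdef
  have hB : B ∈ 𝔅 := hEb _ hh₀A
  -- uniform continuity of `g₀` on `B`
  have hg₀ : {q : ↥B × ↥B |
      ((fun x : ↥B => g₀.1 x.1) q.1, (fun x : ↥B => g₀.1 x.1) q.2) ∈ V'} ∈ uniformity ↥B :=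
    g₀.2.1.1 B hB hV'
  rw [uniformity_subtype, Filter.mem_comap] at hg₀
  obtain ⟨W, hW, hWsub⟩ := hg₀
  -- eventual closeness
  have ev_g : ∀ᶠ p : ↥(ulbAut X 𝔅) × ↥(ulbAut X 𝔅) in nhds (g₀, h₀),
      ∀ x ∈ B, (g₀.1 x, p.1.1 x) ∈ V' := by
    rw [nhds_prod_eq]; exact (ev_close g₀ hB hV').prod_inl _
  have ev_h : ∀ᶠ p : ↥(ulbAut X 𝔅) × ↥(ulbAut X 𝔅) in nhds (g₀, h₀),
      ∀ x ∈ A, (h₀.1 x, p.2.1 x) ∈ W ∩ E := by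
    rw [nhds_prod_eq]; exact (ev_close h₀ hA (Filter.inter_mem hW hE)).prod_inr _
  filter_upwards [ev_g, ev_h] with p hp1 hp2
  intro x hx
  have hyE : (h₀.1 x, p.2.1 x) ∈ E := (hp2 x hx).2
  have hy₀B : h₀.1 x ∈ B := ⟨h₀.1 x, ⟨x, hx, rfl⟩, refl_mem_uniformity hE⟩
  have hyB : p.2.1 x ∈ B := ⟨h₀.1 x, ⟨x, hx, rfl⟩, hyE⟩
  have h1 : (g₀.1 (h₀.1 x), g₀.1 (p.2.1 x)) ∈ V' :=
    hWsub (show ((⟨h₀.1 x, hy₀B⟩ : ↥B), (⟨p.2.1 x, hyB⟩ : ↥B)) ∈ _ from (hp2 x hx).1)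
  have h2 : (g₀.1 (p.2.1 x), p.1.1 (p.2.1 x)) ∈ V' := hp1 _ hyB
  exact hV'V ⟨g₀.1 (p.2.1 x), h1, h2⟩

private lemma ulb_inv_cont : Continuous fun g : ↥(ulbAut X 𝔅) => g⁻¹ := by
  rw [(ulbEmbed_inducing (X := X) (𝔅 := 𝔅)).continuous_iff]
  have heq : (ulbEmbed X 𝔅) ∘ (fun g : ↥(ulbAut X 𝔅) => g⁻¹) =
      Prod.swap ∘ ulbEmbed X 𝔅 := by
    funext g
    simp [ulbEmbed, Prod.swap, Equiv.Perm.inv_def]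
  rw [heq]
  exact continuous_swap.comp (ulbEmbed_inducing (X := X) (𝔅 := 𝔅)).continuous

end Helpers

/-- `ulbAut X 𝔅` is a topological group for the topology of uniform biconvergence
on bounded sets. -/
theorem ulbAut_topologicalGroup {X : Type*} [UniformSpace X] {𝔅 : Set (Set X)}
    (h : IsULB X 𝔅) : IsTopologicalGroup ↥(ulbAut X 𝔅) := by
  have hmul : Continuous fun p : ↥(ulbAut X 𝔅) × ↥(ulbAut X 𝔅) => p.1 * p.2 := by
    rw [(ulbEmbed_inducing (X := X) (𝔅 := 𝔅)).continuous_iff]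
    apply Continuous.prodMk
    · exact (ulb_comp_cont h).congr fun p => rfl
    · exact ((ulb_comp_cont h).comp
        ((ulb_inv_cont.comp continuous_snd).prodMk
          (ulb_inv_cont.comp continuous_fst))).congr fun p => rfl
  exact { continuous_mul := hmul, continuous_inv := ulb_inv_cont }
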